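/- Fix real parameters a, b, c and natural numbers l and ν. For every real x with 0 < x < 1, the complementary polynomial of the hypergeometric equation satisfies the hypergeometric-type ordinary differential equation x(1−x)·(d²/dx²)𝒫_ν(x,l) + [(l−ν)(1−2x) + c − (a+b+1)x]·(d/dx)𝒫_ν(x,l) + ν(2l−ν+a+b)·𝒫_ν(x,l) = 0, where l−ν and 2l−ν are taken as integers; equivalently, 𝒫_ν(·,l) satisfies the hypergeometric equation with parameters A = −ν, B = 2l−ν+a+b, C = l−ν+c. -/

import Mathlib

open Set

namespace ComplHyp

noncomputable def f (p q : ℝ) : ℝ → ℝ := fun t => t ^ p * (1 - t) ^ q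

lemma contDiffOn_f (p q : ℝ) : ContDiffOn ℝ (⊤ : ℕ∞) (f p q) (Ioo 0 1) := by
  intro x hx
  have hx0 : x ≠ 0 := ne_of_gt hx.1
  have hx1 : (1 : ℝ) - x ≠ 0 := by have := hx.2; intro h; nlinarith [this]
  exact ((Real.contDiffAt_rpow_const_of_ne hx0).mul
    ((Real.contDiffAt_rpow_const_of_ne hx1).comp x
      (contDiffAt_const.sub contDiffAt_id))).contDiffWithinAt

lemma contDiffOn_iter (p q : ℝ) (n : ℕ) :
    ContDiffOn ℝ (⊤ : ℕ∞) (iteratedDeriv n (f p q)) (Ioo 0 1) := by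
  induction n with
  | zero => simpa [iteratedDeriv_zero] using contDiffOn_f p q
  | succ n ih =>
      rw [iteratedDeriv_succ]
      exact ih.deriv_of_isOpen isOpen_Ioo (by exact_mod_cast le_top)

lemma hasDerivAt_iter (p q : ℝ) (n : ℕ) {x : ℝ} (hx : x ∈ Ioo (0:ℝ) 1) :
    HasDerivAt (iteratedDeriv n (f p q)) (iteratedDeriv (n + 1) (f p q) x) x := by
  have hd : DifferentiableAt ℝ (iteratedDeriv n (f p q)) x :=
    ((contDiffOn_iter p q n).differentiableOn (by simp)).differentiableAt
      (isOpen_Ioo.mem_nhds hx)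
  rw [iteratedDeriv_succ]
  exact hd.hasDerivAt

lemma deriv_eq_zero {G : ℝ → ℝ} {D x : ℝ}
    (h0 : ∀ y ∈ Ioo (0:ℝ) 1, G y = 0) (hx : x ∈ Ioo (0:ℝ) 1)
    (hG : HasDerivAt G D x) : D = 0 := by
  have hev : G =ᶠ[nhds x] fun _ => (0:ℝ) := by
    filter_upwards [isOpen_Ioo.mem_nhds hx] with y hy using h0 y hy
  exact hG.unique ((hasDerivAt_const x (0:ℝ)).congr_of_eventuallyEq hev)

lemma base (p q : ℝ) : ∀ x ∈ Ioo (0:ℝ) 1,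
    x * (1 - x) * iteratedDeriv 1 (f p q) x
      - (p - (p + q) * x) * iteratedDeriv 0 (f p q) x = 0 := by
  intro x hx
  have hx0 : (0:ℝ) < x := hx.1
  have h1x : (0:ℝ) < 1 - x := by have := hx.2; linarith
  have hA : HasDerivAt (fun t : ℝ => t ^ p) (p * x ^ (p - 1)) x :=
    Real.hasDerivAt_rpow_const (Or.inl hx0.ne')
  have hB : HasDerivAt (fun t : ℝ => (1 - t) ^ q) (-(q * (1 - x) ^ (q - 1))) x := by
    have h := (Real.hasDerivAt_rpow_const (p := q) (Or.inl h1x.ne')).comp x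
      ((hasDerivAt_const x (1:ℝ)).sub (hasDerivAt_id x))
    simpa [Function.comp_def] using h
  have hf : HasDerivAt (f p q)
      (p * x ^ (p - 1) * (1 - x) ^ q + x ^ p * -(q * (1 - x) ^ (q - 1))) x := hA.mul hB
  have h1 : iteratedDeriv 1 (f p q) x
      = p * x ^ (p - 1) * (1 - x) ^ q + x ^ p * -(q * (1 - x) ^ (q - 1)) := by
    rw [iteratedDeriv_one]; exact hf.deriv
  have e1 : x ^ (p - 1) = x ^ p / x := by
    rw [Real.rpow_sub hx0, Real.rpow_one]
  have e2 : (1 - x) ^ (q - 1) = (1 - x) ^ q / (1 - x) := by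
    rw [Real.rpow_sub h1x, Real.rpow_one]
  rw [h1, iteratedDeriv_zero, e1, e2]
  show x * (1 - x) * (p * (x ^ p / x) * (1 - x) ^ q + x ^ p * -(q * ((1 - x) ^ q / (1 - x))))
      - (p - (p + q) * x) * (x ^ p * (1 - x) ^ q) = 0
  field_simp
  ring

lemma ode (p q : ℝ) (n : ℕ) : ∀ x ∈ Ioo (0:ℝ) 1,
    x * (1 - x) * iteratedDeriv (n + 1 + 1) (f p q) x
      + (((n:ℝ) + 1) * (1 - 2 * x) - p + (p + q) * x) * iteratedDeriv (n + 1) (f p q) x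
      + ((n:ℝ) + 1) * (p + q - (n:ℝ)) * iteratedDeriv n (f p q) x = 0 := by
  induction n with
  | zero =>
      intro x hx
      have hG : HasDerivAt
          (fun y => y * (1 - y) * iteratedDeriv 1 (f p q) y
            - (p - (p + q) * y) * iteratedDeriv 0 (f p q) y)
          ((1 * (1 - x) + x * (0 - 1)) * iteratedDeriv 1 (f p q) x
            + x * (1 - x) * iteratedDeriv (1 + 1) (f p q) x
            - ((0 - ((0 * x) + (p + q) * 1)) * iteratedDeriv 0 (f p q) x
              + (p - (p + q) * x) * iteratedDeriv (0 + 1) (f p q) x)) x :=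
        (((hasDerivAt_id x).mul ((hasDerivAt_const x 1).sub (hasDerivAt_id x))).mul
            (hasDerivAt_iter p q 1 hx)).sub
          (((hasDerivAt_const x p).sub ((hasDerivAt_const x (p + q)).mul (hasDerivAt_id x))).mul
            (hasDerivAt_iter p q 0 hx))
      have hD := deriv_eq_zero (base p q) hx hG
      push_cast
      linear_combination hD
  | succ n ih =>
      intro x hx
      have h1 := (((hasDerivAt_id x).mul ((hasDerivAt_const x 1).sub (hasDerivAt_id x))).mul
        (hasDerivAt_iter p q (n + 1 + 1) hx))
      have h2 := ((((hasDerivAt_const x ((n:ℝ)+1)).mul ((hasDerivAt_const x 1).sub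
        ((hasDerivAt_const x 2).mul (hasDerivAt_id x)))).sub (hasDerivAt_const x p)).add
        ((hasDerivAt_const x (p + q)).mul (hasDerivAt_id x))).mul
        (hasDerivAt_iter p q (n + 1) hx)
      have h3 := (hasDerivAt_const x (((n:ℝ) + 1) * (p + q - (n:ℝ)))).mul
        (hasDerivAt_iter p q n hx)
      have hG := (h1.add h2).add h3
      have hD := deriv_eq_zero (fun y hy => by simpa using ih y hy) hx hG
      simp only [id_eq, Pi.mul_apply, Pi.sub_apply, Pi.add_apply] at hD
      push_cast
      linear_combination hD

lemma rpowB (β : ℝ) {y : ℝ} (hy : y < 1) :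
    HasDerivAt (fun t : ℝ => (1 - t) ^ β) (-(β * (1 - y) ^ (β - 1))) y := by
  have h1y : (1:ℝ) - y ≠ 0 := by intro h; nlinarith
  have h := (Real.hasDerivAt_rpow_const (p := β) (Or.inl h1y)).comp y
    ((hasDerivAt_const y (1:ℝ)).sub (hasDerivAt_id y))
  simpa [Function.comp_def] using h

lemma aux (p q α β : ℝ) (ν : ℕ) (hα : α = (ν:ℝ) - p) (hβ : β = (ν:ℝ) - q)
    (x : ℝ) (hx : x ∈ Ioo (0:ℝ) 1) :
    x * (1 - x) *
        deriv (deriv (fun t => t ^ α * (1 - t) ^ β * iteratedDeriv ν (f p q) t)) x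
      + ((1 - α) + (α + β - 2) * x) *
        deriv (fun t => t ^ α * (1 - t) ^ β * iteratedDeriv ν (f p q) t) x
      + (ν:ℝ) * ((ν:ℝ) - α - β + 1) * (x ^ α * (1 - x) ^ β * iteratedDeriv ν (f p q) x)
      = 0 := by
  have hx0 : (0:ℝ) < x := hx.1
  have h1x : (0:ℝ) < 1 - x := by have := hx.2; linarith
  have key : ∀ y ∈ Ioo (0:ℝ) 1,
      HasDerivAt (fun t => t ^ α * (1 - t) ^ β * iteratedDeriv ν (f p q) t)
        ((α * y ^ (α - 1) * (1 - y) ^ β + y ^ α * -(β * (1 - y) ^ (β - 1)))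
            * iteratedDeriv ν (f p q) y
          + y ^ α * (1 - y) ^ β * iteratedDeriv (ν + 1) (f p q) y) y := by
    intro y hy
    exact ((Real.hasDerivAt_rpow_const (p := α) (Or.inl hy.1.ne')).mul (rpowB β hy.2)).mul
      (hasDerivAt_iter p q ν hy)
  have e2 : deriv (deriv (fun t => t ^ α * (1 - t) ^ β * iteratedDeriv ν (f p q) t)) x
      = deriv (fun y => (α * y ^ (α - 1) * (1 - y) ^ β + y ^ α * -(β * (1 - y) ^ (β - 1)))
            * iteratedDeriv ν (f p q) y
          + y ^ α * (1 - y) ^ β * iteratedDeriv (ν + 1) (f p q) y) x :=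
    Filter.EventuallyEq.deriv_eq (by
      filter_upwards [isOpen_Ioo.mem_nhds hx] with y hy using (key y hy).deriv)
  have hA : HasDerivAt (fun t : ℝ => t ^ α) (α * x ^ (α - 1)) x :=
    Real.hasDerivAt_rpow_const (Or.inl hx0.ne')
  have hA1 : HasDerivAt (fun t : ℝ => t ^ (α - 1)) ((α - 1) * x ^ (α - 1 - 1)) x :=
    Real.hasDerivAt_rpow_const (Or.inl hx0.ne')
  have hB : HasDerivAt (fun t : ℝ => (1 - t) ^ β) (-(β * (1 - x) ^ (β - 1))) x :=
    rpowB β hx.2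
  have hB1 : HasDerivAt (fun t : ℝ => (1 - t) ^ (β - 1)) (-((β - 1) * (1 - x) ^ (β - 1 - 1))) x :=
    rpowB (β - 1) hx.2
  have hF0 := hasDerivAt_iter p q ν hx
  have hF1 := hasDerivAt_iter p q (ν + 1) hx
  have hP2 := ((((((hasDerivAt_const x α).mul hA1).mul hB).add
      (hA.mul ((((hasDerivAt_const x β).mul hB1))).neg)).mul hF0).add
    (((hA.mul hB)).mul hF1))
  simp only [Pi.mul_def, Pi.add_def, Pi.neg_def] at hP2
  rw [e2, hP2.deriv, (key x hx).deriv]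
  have ea1 : x ^ (α - 1) = x ^ α / x := by rw [Real.rpow_sub hx0, Real.rpow_one]
  have ea2 : x ^ (α - 1 - 1) = x ^ α / x / x := by
    rw [Real.rpow_sub hx0, Real.rpow_one, ea1]
  have eb1 : (1 - x) ^ (β - 1) = (1 - x) ^ β / (1 - x) := by
    rw [Real.rpow_sub h1x, Real.rpow_one]
  have eb2 : (1 - x) ^ (β - 1 - 1) = (1 - x) ^ β / (1 - x) / (1 - x) := by
    rw [Real.rpow_sub h1x, Real.rpow_one, eb1]
  rw [ea1, ea2, eb1, eb2]
  have hODE := ode p q ν x hx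
  have hG2 : iteratedDeriv (ν + 1 + 1) (f p q) x
      = (-((((ν:ℝ) + 1) * (1 - 2 * x) - p + (p + q) * x) * iteratedDeriv (ν + 1) (f p q) x)
          - ((ν:ℝ) + 1) * (p + q - (ν:ℝ)) * iteratedDeriv ν (f p q) x) / (x * (1 - x)) := by
    rw [eq_div_iff (by positivity)]
    linarith [hODE]
  rw [hG2, hα, hβ]
  field_simp
  ring

end ComplHyp

/-- Complementary polynomial of the hypergeometric equation:
`𝒫_ν(x,l) = x^(ν+1-c-l) (1-x)^(ν-l+c-a-b) (dᵛ/dtᵛ)(t^(c-1+l)(1-t)^(l+a+b-c)) |_{t=x}`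
(rpow powers). -/
noncomputable def complHypergeom (a b c : ℝ) (l ν : ℕ) (x : ℝ) : ℝ :=
  x ^ ((ν : ℝ) + 1 - c - (l : ℝ)) * (1 - x) ^ ((ν : ℝ) - (l : ℝ) + c - a - b) *
    iteratedDeriv ν
      (fun t : ℝ => t ^ (c - 1 + (l : ℝ)) * (1 - t) ^ ((l : ℝ) + a + b - c)) x

/-- The complementary polynomials satisfy the hypergeometric equation with
parameters `A = -ν`, `B = 2l-ν+a+b`, `C = l-ν+c`. -/
theorem complHypergeom_ode (a b c : ℝ) (l ν : ℕ) (x : ℝ) (hx0 : 0 < x) (hx1 : x < 1) :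
    x * (1 - x) * iteratedDeriv 2 (fun t => complHypergeom a b c l ν t) x
      + ((((l : ℤ) - (ν : ℤ) : ℤ) : ℝ) * (1 - 2 * x) + c - (a + b + 1) * x)
          * deriv (fun t => complHypergeom a b c l ν t) x
      + (ν : ℝ) * (((2 * (l : ℤ) - (ν : ℤ) : ℤ) : ℝ) + a + b)
          * complHypergeom a b c l ν x = 0 := by
  have h := ComplHyp.aux (c - 1 + (l:ℝ)) ((l:ℝ) + a + b - c)
    ((ν : ℝ) + 1 - c - (l : ℝ)) ((ν : ℝ) - (l : ℝ) + c - a - b) ν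
    (by ring) (by ring) x ⟨hx0, hx1⟩
  have hfun : (fun t => complHypergeom a b c l ν t)
      = fun t => t ^ ((ν : ℝ) + 1 - c - (l : ℝ)) * (1 - t) ^ ((ν : ℝ) - (l : ℝ) + c - a - b) *
        iteratedDeriv ν (ComplHyp.f (c - 1 + (l:ℝ)) ((l:ℝ) + a + b - c)) t := rfl
  rw [show (2:ℕ) = 1 + 1 from rfl, iteratedDeriv_succ, iteratedDeriv_one, hfun]
  have happ : complHypergeom a b c l ν x
      = x ^ ((ν : ℝ) + 1 - c - (l : ℝ)) * (1 - x) ^ ((ν : ℝ) - (l : ℝ) + c - a - b) *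
        iteratedDeriv ν (ComplHyp.f (c - 1 + (l:ℝ)) ((l:ℝ) + a + b - c)) x := rfl
  rw [happ]
  push_cast
  linear_combination h
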